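/- Suppose H : [p₀,0] → ℝ is twice continuously differentiable with H''(p) = γ(p)·H'(p)³ for all p ∈ [p₀,0], H(p₀) = -d, H(0) = 0, and H'(p) > 0 for all p ∈ [p₀,0]. Then the function p ↦ 1/H'(p)² + 2Γ(p) is constant on [p₀,0]; denoting its constant value by θ, one has θ > 2·max_{[p₀,0]} Γ, ∫_{p₀}^0 (θ - 2Γ(s))^{-1/2} ds = d, and H(p) = -∫_p^0 (θ - 2Γ(s))^{-1/2} ds for all p ∈ [p₀,0]. -/

import Mathlib

open Real Set

/-- Fix p₀ < 0, d > 0, γ continuous on [p₀,0], Γ(p) = ∫_{p₀}^p γ.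
If H is C² on [p₀,0] with H'' = γ·H'³, H(p₀) = -d, H(0) = 0, H' > 0, then
1/H'² + 2Γ is constant with value θ, θ > 2 max Γ, ∫_{p₀}^0 (θ-2Γ)^{-1/2} = d,
and H(p) = -∫_p^0 (θ-2Γ(s))^{-1/2} ds. -/
theorem laminar_solution_necessarily_of_given_form
    (p₀ d : ℝ) (hp₀ : p₀ < 0) (hd : 0 < d)
    (γ : ℝ → ℝ) (hγ : ContinuousOn γ (Icc p₀ 0))
    (Γ : ℝ → ℝ) (hΓ : ∀ p ∈ Icc p₀ 0, Γ p = ∫ s in p₀..p, γ s)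
    (H : ℝ → ℝ) (hH : ContDiffOn ℝ 2 H (Icc p₀ 0))
    (hode : ∀ p ∈ Icc p₀ 0,
      derivWithin (derivWithin H (Icc p₀ 0)) (Icc p₀ 0) p
        = γ p * (derivWithin H (Icc p₀ 0) p) ^ 3)
    (hHp₀ : H p₀ = -d) (hH0 : H 0 = 0)
    (hH' : ∀ p ∈ Icc p₀ 0, 0 < derivWithin H (Icc p₀ 0) p) :
    ∃ θ : ℝ,
      (∀ p ∈ Icc p₀ 0, 1 / (derivWithin H (Icc p₀ 0) p) ^ 2 + 2 * Γ p = θ) ∧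
      2 * sSup (Γ '' Icc p₀ 0) < θ ∧
      (∫ s in p₀..(0:ℝ), (θ - 2 * Γ s) ^ (-(1:ℝ)/2)) = d ∧
      ∀ p ∈ Icc p₀ 0, H p = -∫ s in p..(0:ℝ), (θ - 2 * Γ s) ^ (-(1:ℝ)/2) := by
  have hle : p₀ ≤ (0:ℝ) := hp₀.le
  set s : Set ℝ := Icc p₀ 0 with hs
  set g : ℝ → ℝ := derivWithin H s with hg
  have hus : UniqueDiffOn ℝ s := uniqueDiffOn_Icc hp₀
  -- g is C¹, differentiable, continuous
  have hg1 : ContDiffOn ℝ 1 g s := hH.derivWithin hus (by norm_num)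
  have hgdiff : DifferentiableOn ℝ g s := hg1.differentiableOn (by norm_num)
  have hgcont : ContinuousOn g s := hgdiff.continuousOn
  have hgd : ∀ x ∈ s, HasDerivWithinAt g (γ x * g x ^ 3) s x := by
    intro x hx
    have h := (hgdiff x hx).hasDerivWithinAt
    rwa [derivWithin, ← derivWithin, hode x hx] at h
  -- primitive of γ
  set G : ℝ → ℝ := fun p => ∫ t in p₀..p, γ t with hGdef
  have hGd : ∀ x ∈ s, HasDerivWithinAt G (γ x) s x := by
    intro x hx
    haveI : Fact (x ∈ Icc p₀ 0) := ⟨hx⟩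
    have hint : IntervalIntegrable γ MeasureTheory.volume p₀ x :=
      (hγ.mono (by rw [uIcc_of_le hx.1]; exact Icc_subset_Icc_right hx.2)).intervalIntegrable
    exact intervalIntegral.integral_hasDerivWithinAt_right hint
      ⟨Icc p₀ 0, self_mem_nhdsWithin, hγ.aestronglyMeasurable measurableSet_Icc⟩ (hγ x hx)
  -- F is constant
  set F : ℝ → ℝ := fun p => (g p ^ 2)⁻¹ + 2 * G p with hFdef
  have hFd : ∀ x ∈ s, HasDerivWithinAt F 0 s x := by
    intro x hx
    have hgx : g x ≠ 0 := (hH' x hx).ne'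
    have t1 : HasDerivWithinAt (fun p => (g p ^ 2)⁻¹)
        (-(2 * g x ^ 1 * (γ x * g x ^ 3)) / (g x ^ 2) ^ 2) s x :=
      (((hgd x hx).pow 2).inv (pow_ne_zero 2 hgx))
    have t2 : HasDerivWithinAt (fun p => 2 * G p) (2 * γ x) s x := (hGd x hx).const_mul 2
    have := t1.add t2
    refine this.congr_deriv ?_
    field_simp
    ring
  have hFcont : ContinuousOn F s := fun x hx => (hFd x hx).continuousWithinAt
  have hFconst : ∀ x ∈ s, F x = F p₀ := by
    apply constant_of_has_deriv_right_zero hFcont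
    intro x hx
    exact (hFd x ⟨hx.1, hx.2.le⟩).mono_of_mem_nhdsWithin (Icc_mem_nhdsGE_of_mem hx)
  have hGp₀ : G p₀ = 0 := intervalIntegral.integral_same
  set θ : ℝ := F p₀ with hθ
  -- key identities
  have claim1 : ∀ p ∈ s, 1 / g p ^ 2 + 2 * Γ p = θ := by
    intro p hp
    rw [hΓ p hp, one_div]
    exact hFconst p hp
  have key : ∀ p ∈ s, θ - 2 * Γ p = (g p ^ 2)⁻¹ := by
    intro p hp
    have := claim1 p hp
    rw [one_div] at this
    linarith
  have keypos : ∀ p ∈ s, 0 < θ - 2 * Γ p := by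
    intro p hp
    rw [key p hp]
    exact inv_pos.2 (pow_pos (hH' p hp) 2)
  -- integrand equals g on s
  have integrand_eq : ∀ t ∈ s, (θ - 2 * Γ t) ^ (-(1:ℝ)/2) = g t := by
    intro t ht
    have hgt : 0 < g t := hH' t ht
    have h1 : θ - 2 * Γ t = (g t)⁻¹ ^ 2 := by rw [key t ht, inv_pow]
    rw [h1, ← Real.rpow_natCast ((g t)⁻¹) 2, ← Real.rpow_mul (inv_nonneg.2 hgt.le)]
    norm_num [Real.rpow_neg_one]
  -- FTC for H
  have hHcont : ContinuousOn H s := hH.continuousOn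
  have hHdiff : DifferentiableOn ℝ H s := hH.differentiableOn (by norm_num)
  have ftc : ∀ p ∈ s, (∫ t in p..(0:ℝ), g t) = H 0 - H p := by
    intro p hp
    apply intervalIntegral.integral_eq_sub_of_hasDeriv_right_of_le hp.2
      (hHcont.mono (Icc_subset_Icc_left hp.1))
    · intro x hx
      have hx' : x ∈ s := ⟨hp.1.trans hx.1.le, hx.2.le⟩
      have := (hHdiff x hx').hasDerivWithinAt
      exact this.mono_of_mem_nhdsWithin (mem_nhdsWithin.2 ⟨Iio 0, isOpen_Iio, hx.2,
        fun u hu => ⟨hx'.1.trans hu.2.le, hu.1.le⟩⟩)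
    · exact (hgcont.mono (by rw [uIcc_of_le hp.2]; exact Icc_subset_Icc_left hp.1)).intervalIntegrable
  have hintcongr : ∀ p ∈ s, (∫ t in p..(0:ℝ), (θ - 2 * Γ t) ^ (-(1:ℝ)/2)) = H 0 - H p := by
    intro p hp
    rw [intervalIntegral.integral_congr (g := g)
      (fun t ht => integrand_eq t (by
        rw [uIcc_of_le hp.2] at ht; exact ⟨hp.1.trans ht.1, ht.2⟩))]
    exact ftc p hp
  refine ⟨θ, claim1, ?_, ?_, ?_⟩
  · -- strict sup inequality
    have hΓcont : ContinuousOn Γ s := by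
      refine ContinuousOn.congr (f := G) (fun x hx => (hGd x hx).continuousWithinAt) ?_
      intro x hx; exact hΓ x hx
    obtain ⟨x, hx, hmax⟩ := isCompact_Icc.exists_isMaxOn (nonempty_Icc.2 hle) hΓcont
    have : sSup (Γ '' s) = Γ x :=
      IsGreatest.csSup_eq ⟨mem_image_of_mem Γ hx, fun y hy => by
        obtain ⟨z, hz, rfl⟩ := hy; exact hmax hz⟩
    rw [this]
    linarith [keypos x hx]
  · have := hintcongr p₀ (left_mem_Icc.2 hle)
    rw [this, hH0, hHp₀]; ring
  · intro p hp
    rw [hintcongr p hp, hH0]; ring
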